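/- Let K be an infinite compact Hausdorff space. Then the Banach space C(K) of real-valued continuous functions on K with the supremum norm admits no normalized 1-unconditional basis; that is, there exist no families (e_i)_{i∈ℕ} in C(K) and (e*_i)_{i∈ℕ} in C(K)* satisfying the conditions of a normalized 1-unconditional basis. -/

import Mathlib

noncomputable section

/-- `(e, f)` is a normalized 1-unconditional basis of `X` with biorthogonal functionals `f`. -/
structure IsUncondBasis {X : Type*} [NormedAddCommGroup X] [NormedSpace ℝ X]
    (e : ℕ → X) (f : ℕ → X →L[ℝ] ℝ) : Prop where
  norm_e : ∀ i, ‖e i‖ = 1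
  biorth : ∀ i j, f i (e j) = if i = j then (1 : ℝ) else 0
  expand : ∀ x : X, HasSum (fun i => f i x • e i) x
  signs : ∀ (x : X) (θ : ℕ → ℝ), (∀ i, θ i = 1 ∨ θ i = -1) →
    ∃ y : X, HasSum (fun i => θ i • f i x • e i) y ∧ ‖y‖ = ‖x‖

namespace UncondBasisAux

open Set Function

variable {X : Type*} [NormedAddCommGroup X] [NormedSpace ℝ X]
variable {e : ℕ → X} {f : ℕ → X →L[ℝ] ℝ}

/-- Flipping a single sign is norm-preserving. -/
lemma flip_norm (hb : IsUncondBasis e f) (x : X) (j : ℕ) :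
    ‖x - (2 * f j x) • e j‖ = ‖x‖ := by
  obtain ⟨y, hy, hn⟩ := hb.signs x (fun i => if i = j then (-1 : ℝ) else 1)
    (fun i => by by_cases h : i = j <;> simp [h])
  have h1 : (fun i => (if i = j then (-1 : ℝ) else 1) • f i x • e i)
      = Function.update (fun i => f i x • e i) j (-(f j x • e j)) := by
    funext i
    by_cases h : i = j
    · subst h; simp
    · simp [Function.update_of_ne h, h]
  have h2 := (hb.expand x).update j (-(f j x • e j))
  rw [← h1] at h2
  have h3 : y = -(f j x • e j) - f j x • e j + x := hy.unique h2
  have h4 : -(f j x • e j) - f j x • e j + x = x - (2 * f j x) • e j := by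
    rw [mul_smul, two_smul]; abel
  rw [← hn, h3, h4]

lemma T_invol (hb : IsUncondBasis e f) (x : X) (j : ℕ) :
    (x - (2 * f j x) • e j) - (2 * f j (x - (2 * f j x) • e j)) • e j = x := by
  have hjj : f j (e j) = 1 := by simpa using hb.biorth j j
  have h1 : f j (x - (2 * f j x) • e j) = -(f j x) := by
    rw [map_sub, map_smul, smul_eq_mul, hjj]; ring
  rw [h1]
  have : (2 * -(f j x)) • e j = -((2 * f j x) • e j) := by
    rw [← neg_smul]; ring_nf
  rw [this]; abel

end UncondBasisAux

section CK

open Set Function UncondBasisAux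

variable {K : Type*} [TopologicalSpace K] [CompactSpace K] [T2Space K]
variable {e : ℕ → C(K, ℝ)} {f : ℕ → C(K, ℝ) →L[ℝ] ℝ}

/-- Each `f j 1 • e j` is `{0,1}`-valued. -/
lemma coord_of_one_indicator [Nonempty K] (hb : IsUncondBasis e f) (j : ℕ) (t : K) :
    f j (1 : C(K, ℝ)) * e j t = 0 ∨ f j (1 : C(K, ℝ)) * e j t = 1 := by
  classical
  set T : C(K, ℝ) → C(K, ℝ) := fun x => x - (2 * f j x) • e j with hT
  have hTnorm : ∀ x, ‖T x‖ = ‖x‖ := fun x => flip_norm hb x j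
  have hTT : ∀ x, T (T x) = x := fun x => T_invol hb x j
  have hTadd : ∀ x y, T (x + y) = T x + T y := by
    intro x y
    simp only [hT, map_add]
    rw [mul_add, add_smul]
    abel
  set ε : C(K, ℝ) := T 1 with hε
  have hεnorm : ‖ε‖ = 1 := by rw [hTnorm 1, norm_one]
  have hεle : ∀ s, |ε s| ≤ 1 := by
    intro s
    have := ContinuousMap.norm_coe_le_norm ε s
    rwa [hεnorm, Real.norm_eq_abs] at this
  -- first show |ε t| = 1
  have habs : |ε t| = 1 := by
    by_contra hne
    have hlt : |ε t| < 1 := lt_of_le_of_ne (hεle t) hne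
    set δ : ℝ := (1 - |ε t|) / 2 with hδ
    have hδpos : 0 < δ := by simp only [hδ]; linarith
    set h : C(K, ℝ) := ⟨fun s => min δ (1 - |ε s|),
      (continuous_const.min (continuous_const.sub ε.continuous.abs))⟩ with hh
    have hhval : ∀ s, h s = min δ (1 - |ε s|) := fun s => rfl
    have hht : h t = δ := by
      rw [hhval, min_eq_left]; linarith
    have hh0 : ∀ s, 0 ≤ h s := by
      intro s; rw [hhval]
      exact le_min hδpos.le (by linarith [hεle s])
    have hhb : ∀ s, |ε s| + h s ≤ 1 := by
      intro s; rw [hhval]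
      have := min_le_right δ (1 - |ε s|)
      linarith
    have hp : ‖ε + h‖ ≤ 1 := by
      rw [ContinuousMap.norm_le _ zero_le_one]
      intro s
      rw [ContinuousMap.add_apply, Real.norm_eq_abs]
      calc |ε s + h s| ≤ |ε s| + |h s| := abs_add_le _ _
        _ = |ε s| + h s := by rw [abs_of_nonneg (hh0 s)]
        _ ≤ 1 := hhb s
    have hq : ‖ε - h‖ ≤ 1 := by
      rw [ContinuousMap.norm_le _ zero_le_one]
      intro s
      rw [ContinuousMap.sub_apply, Real.norm_eq_abs]
      calc |ε s - h s| ≤ |ε s| + |h s| := abs_sub _ _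
        _ = |ε s| + h s := by rw [abs_of_nonneg (hh0 s)]
        _ ≤ 1 := hhb s
    have hsum : T (ε + h) + T (ε - h) = 2 := by
      have h1 : (ε + h) + (ε - h) = ε + ε := by abel
      have h2 : T ((ε + h) + (ε - h)) = T (ε + h) + T (ε - h) := hTadd _ _
      rw [h1, hTadd] at h2
      have h3 : T ε = 1 := by rw [hε, hTT]
      rw [h3] at h2
      rw [← h2]; norm_num
    have hple : ∀ s, |T (ε + h) s| ≤ 1 := by
      intro s
      have := ContinuousMap.norm_coe_le_norm (T (ε + h)) s
      rw [Real.norm_eq_abs] at this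
      exact this.trans (by rw [hTnorm]; exact hp)
    have hqle : ∀ s, |T (ε - h) s| ≤ 1 := by
      intro s
      have := ContinuousMap.norm_coe_le_norm (T (ε - h)) s
      rw [Real.norm_eq_abs] at this
      exact this.trans (by rw [hTnorm]; exact hq)
    have hpq : T (ε + h) = T (ε - h) := by
      ext s
      have hs : T (ε + h) s + T (ε - h) s = 2 := by
        have := congrArg (fun z : C(K, ℝ) => z s) hsum
        have h2s : (2 : C(K, ℝ)) s = 2 := by
          exact_mod_cast ContinuousMap.natCast_apply (α := K) (β := ℝ) 2 s
        simpa [h2s] using this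
      have h1 := abs_le.mp (hple s)
      have h2 := abs_le.mp (hqle s)
      have : T (ε + h) s = 1 := by linarith [h1.1, h1.2, h2.1, h2.2]
      have h4 : T (ε - h) s = 1 := by linarith
      rw [this, h4]
    have : ε + h = ε - h := by
      have := congrArg T hpq
      rwa [hTT, hTT] at this
    have hzero : h t = 0 := by
      have := congrArg (fun z : C(K, ℝ) => z t) this
      simp only [ContinuousMap.add_apply, ContinuousMap.sub_apply] at this
      linarith
    rw [hht] at hzero
    linarith
  -- now conclude
  have hεt : ε t = 1 - 2 * (f j (1 : C(K, ℝ)) * e j t) := by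
    simp only [hε, hT, ContinuousMap.sub_apply, ContinuousMap.smul_apply,
      ContinuousMap.one_apply, smul_eq_mul]
    ring
  rcases abs_eq (by norm_num : (0:ℝ) ≤ 1) |>.mp habs with h | h
  · left; rw [hεt] at h; linarith
  · right; rw [hεt] at h; linarith

end CK

open Set Function UncondBasisAux in
/-- If `K` is an infinite compact Hausdorff space, then the Banach space `C(K, ℝ)`
of real-valued continuous functions with the supremum norm has no normalized
1-unconditional basis. -/
theorem continuousMap_no_uncond_basis (K : Type*) [TopologicalSpace K] [CompactSpace K]
    [T2Space K] [Infinite K] :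
    ¬ ∃ (e : ℕ → C(K, ℝ)) (f : ℕ → C(K, ℝ) →L[ℝ] ℝ), IsUncondBasis e f := by
  classical
  rintro ⟨e, f, hb⟩
  have hne : Nonempty K := inferInstance
  set g : ℕ → K → ℝ := fun i t => f i (1 : C(K, ℝ)) * e i t with hg
  have hg01 : ∀ i t, g i t = 0 ∨ g i t = 1 := fun i t => coord_of_one_indicator hb i t
  -- uniform convergence of the expansion of 1
  have hexp := hb.expand (1 : C(K, ℝ))
  have h2 := Metric.tendsto_nhds.mp hexp (1/2) (by norm_num)
  obtain ⟨F₀, hF₀⟩ := Filter.eventually_atTop.mp h2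
  have hsum : ∀ F : Finset ℕ, F₀ ⊆ F → ∀ t, |(∑ i ∈ F, g i t) - 1| < 1/2 := by
    intro F hF t
    have := hF₀ F hF
    rw [dist_eq_norm] at this
    have h3 := ContinuousMap.norm_coe_le_norm ((∑ i ∈ F, f i (1 : C(K, ℝ)) • e i) - 1) t
    have h4 : ((∑ i ∈ F, f i (1 : C(K, ℝ)) • e i) - 1) t = (∑ i ∈ F, g i t) - 1 := by
      simp [hg, ContinuousMap.sum_apply]
    rw [h4, Real.norm_eq_abs] at h3
    exact h3.trans_lt this
  -- cover
  have hcover : ∀ t, ∃ i ∈ F₀, g i t = 1 := by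
    intro t
    have h5 := hsum F₀ (le_refl F₀) t
    have h6 : (∑ i ∈ F₀, g i t) ≠ 0 := by
      intro h; rw [h] at h5; rw [abs_of_nonpos (by norm_num)] at h5; linarith
    obtain ⟨i, hi, hgi⟩ := Finset.exists_ne_zero_of_sum_ne_zero h6
    exact ⟨i, hi, (hg01 i t).resolve_left hgi⟩
  -- some piece is infinite
  have hinf : ∃ j ∈ F₀, {t : K | g j t = 1}.Infinite := by
    by_contra hcon
    push_neg at hcon
    have huniv : (Set.univ : Set K) ⊆ ⋃ j ∈ F₀, {t : K | g j t = 1} := by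
      intro t _
      obtain ⟨i, hi, hgi⟩ := hcover t
      exact Set.mem_biUnion hi hgi
    have : (Set.univ : Set K).Finite :=
      Set.Finite.subset (Set.Finite.biUnion F₀.finite_toSet fun j hj => hcon j hj) huniv
    exact Set.infinite_univ this
  obtain ⟨j, hjF, hCinf⟩ := hinf
  set C : Set K := {t : K | g j t = 1} with hC
  set a : ℝ := f j (1 : C(K, ℝ)) with ha
  -- basic facts about a and e j
  obtain ⟨t₀', ht₀'⟩ := hCinf.nonempty
  have ht₀'C : a * e j t₀' = 1 := ht₀'
  have hane : a ≠ 0 := by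
    intro h; rw [h, zero_mul] at ht₀'C; exact zero_ne_one ht₀'C
  have hejnorm : ‖e j‖ = 1 := hb.norm_e j
  have haabs_ge : 1 ≤ |a| := by
    have h1 : |a| * |e j t₀'| = 1 := by rw [← abs_mul, ht₀'C, abs_one]
    have h2 : |e j t₀'| ≤ 1 := by
      have := ContinuousMap.norm_coe_le_norm (e j) t₀'
      rwa [hejnorm, Real.norm_eq_abs] at this
    nlinarith [abs_nonneg a, abs_nonneg (e j t₀')]
  have haabs_le : |a| ≤ 1 := by
    have h1 : ∀ t, |e j t| ≤ |a|⁻¹ := by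
      intro t
      have h2 : |a * e j t| ≤ 1 := by
        rcases hg01 j t with h | h <;> rw [hg] at h <;> simp only at h <;> rw [h] <;> norm_num
      rw [abs_mul] at h2
      rw [← one_div, le_div_iff₀ (abs_pos.mpr hane), mul_comm]
      exact h2
    have h3 : ‖e j‖ ≤ |a|⁻¹ := by
      rw [ContinuousMap.norm_le _ (inv_nonneg.mpr (abs_nonneg a))]
      intro t; rw [Real.norm_eq_abs]; exact h1 t
    rw [hejnorm] at h3
    exact (one_le_inv_iff₀.mp h3).2
  have haa : a * a = 1 := by
    rcases (abs_eq (zero_le_one)).mp (le_antisymm haabs_le haabs_ge) with h | h <;> rw [h] <;> norm_num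
  have hmemC : ∀ t : K, t ∈ C ↔ a * e j t = 1 := fun t => Iff.rfl
  have honC : ∀ t ∈ C, e j t = a := by
    intro t ht
    have h1 : a * e j t = 1 := (hmemC t).mp ht
    linear_combination a * h1 - e j t * haa
  have hoffC : ∀ t ∉ C, e j t = 0 := by
    intro t ht
    have h1 : a * e j t = 0 := by
      rcases hg01 j t with h | h
      · exact h
      · exact absurd ((hmemC t).mpr h) ht
    exact (mul_eq_zero.mp h1).resolve_left hane
  have hCopen : IsOpen C := by
    have hCeq : C = (fun t => a * e j t) ⁻¹' (Set.Ioi (1/2 : ℝ)) := by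
      ext t
      simp only [Set.mem_preimage, Set.mem_Ioi]
      constructor
      · intro ht; rw [(hmemC t).mp ht]; norm_num
      · intro ht
        rcases hg01 j t with h | h
        · rw [hg] at h; simp only at h; rw [h] at ht; norm_num at ht
        · exact (hmemC t).mpr h
    rw [hCeq]
    exact isOpen_Ioi.preimage (continuous_const.mul (e j).continuous)
  -- three distinct points in C
  obtain ⟨t₁, ht₁C⟩ := hCinf.nonempty
  obtain ⟨t₂, ht₂⟩ := (hCinf.diff (Set.finite_singleton t₁)).nonempty
  obtain ⟨t₃, ht₃⟩ := (hCinf.diff ((Set.finite_singleton t₁).union (Set.finite_singleton t₂))).nonempty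
  have ht₂C : t₂ ∈ C := ht₂.1
  have ht₃C : t₃ ∈ C := ht₃.1
  have h12 : t₁ ≠ t₂ := fun h => ht₂.2 (by rw [← h]; exact Set.mem_singleton t₁)
  have h31 : t₃ ≠ t₁ := fun h => ht₃.2 (by rw [h]; exact Set.mem_union_left _ (Set.mem_singleton t₁))
  have h32 : t₃ ≠ t₂ := fun h => ht₃.2 (by rw [h]; exact Set.mem_union_right _ (Set.mem_singleton t₂))
  -- separate t₁ and t₂
  obtain ⟨W₁, W₂, hW₁o, hW₂o, ht₁W, ht₂W, hWd⟩ := t2_separation h12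
  set U₁ : Set K := (W₁ ∩ C) ∩ {t₃}ᶜ with hU₁
  set U₂ : Set K := (W₂ ∩ C) ∩ {t₃}ᶜ with hU₂
  have hU₁o : IsOpen U₁ := ((hW₁o.inter hCopen).inter isClosed_singleton.isOpen_compl)
  have hU₂o : IsOpen U₂ := ((hW₂o.inter hCopen).inter isClosed_singleton.isOpen_compl)
  have ht₁U : t₁ ∈ U₁ := ⟨⟨ht₁W, ht₁C⟩, fun h => h31 (Set.mem_singleton_iff.mp h).symm⟩
  have ht₂U : t₂ ∈ U₂ := ⟨⟨ht₂W, ht₂C⟩, fun h => h32 (Set.mem_singleton_iff.mp h).symm⟩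
  have hU₁C : U₁ ⊆ C := fun t ht => ht.1.2
  have hU₂C : U₂ ⊆ C := fun t ht => ht.1.2
  have ht₃U₁ : t₃ ∉ U₁ := fun h => h.2 rfl
  have ht₃U₂ : t₃ ∉ U₂ := fun h => h.2 rfl
  have hUd : ∀ t, t ∉ U₁ ∨ t ∉ U₂ := by
    intro t
    by_cases h : t ∈ W₁
    · right; intro h2; exact (Set.disjoint_left.mp hWd h) h2.1.1
    · left; intro h2; exact h h2.1.1
  -- Urysohn bumps
  obtain ⟨u, hu0, hu1, hu01⟩ := exists_continuous_zero_one_of_isClosed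
    (isClosed_compl_iff.mpr hU₁o) isClosed_singleton
    (Set.disjoint_singleton_right.mpr (fun h => h ht₁U))
  obtain ⟨v, hv0, hv1, hv01⟩ := exists_continuous_zero_one_of_isClosed
    (isClosed_compl_iff.mpr hU₂o) isClosed_singleton
    (Set.disjoint_singleton_right.mpr (fun h => h ht₂U))
  have hut₁ : u t₁ = 1 := by have := hu1 (Set.mem_singleton t₁); simpa using this
  have hvt₂ : v t₂ = 1 := by have := hv1 (Set.mem_singleton t₂); simpa using this
  have huoff : ∀ t, t ∉ U₁ → u t = 0 := fun t ht => by have := hu0 (by exact ht); simpa using this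
  have hvoff : ∀ t, t ∉ U₂ → v t = 0 := fun t ht => by have := hv0 (by exact ht); simpa using this
  -- key computation: half
  have half : ∀ x : C(K, ℝ), (∀ t, 0 ≤ x t ∧ x t ≤ 1) → (∀ t, t ∉ C → x t = 0) →
      (∃ t, x t = 1) → (∃ t ∈ C, x t = 0) →
      a * f j x = 0 ∨ a * f j x = 1/2 := by
    rintro x h01 hoff ⟨s1, hx1⟩ ⟨s0, hs0C, hx0⟩
    have hs1C : s1 ∈ C := by
      by_contra h
      rw [hoff s1 h] at hx1
      norm_num at hx1
    have hxle : ‖x‖ ≤ 1 := by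
      rw [ContinuousMap.norm_le _ zero_le_one]
      intro t
      rw [Real.norm_eq_abs, abs_le]
      exact ⟨by linarith [(h01 t).1], (h01 t).2⟩
    have hxge : (1 : ℝ) ≤ ‖x‖ := by
      have := ContinuousMap.norm_coe_le_norm x s1
      rw [hx1] at this
      simpa using this
    have hxnorm : ‖x‖ = 1 := le_antisymm hxle hxge
    set α : ℝ := a * f j x with hα
    have hflip := flip_norm hb x j
    rw [hxnorm] at hflip
    set y : C(K, ℝ) := x - (2 * f j x) • e j with hy
    have hyC : ∀ t ∈ C, y t = x t - 2 * α := by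
      intro t htC
      simp only [hy, ContinuousMap.sub_apply, ContinuousMap.smul_apply, smul_eq_mul]
      rw [honC t htC, hα]
      ring
    have hyoff : ∀ t ∉ C, y t = 0 := by
      intro t ht
      simp only [hy, ContinuousMap.sub_apply, ContinuousMap.smul_apply, smul_eq_mul]
      rw [hoffC t ht, hoff t ht]
      ring
    have hyle : ∀ t, |y t| ≤ 1 := by
      intro t
      have := ContinuousMap.norm_coe_le_norm y t
      rw [Real.norm_eq_abs] at this
      rw [hy] at this ⊢
      exact this.trans (le_of_eq hflip)
    have h0 : |2 * α| ≤ 1 := by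
      have := hyle s0
      rw [hyC s0 hs0C, hx0] at this
      rw [← abs_neg]
      convert this using 2
      ring
    have h1' : |1 - 2 * α| ≤ 1 := by
      have := hyle s1
      rwa [hyC s1 hs1C, hx1] at this
    have hd0 := abs_le.mp h0
    have hd1 := abs_le.mp h1'
    have hmaxnn : (0 : ℝ) ≤ max (2 * α) (1 - 2 * α) :=
      le_trans (by linarith [hd1.2]) (le_max_left _ _)
    have hymax : ‖y‖ ≤ max (2 * α) (1 - 2 * α) := by
      rw [ContinuousMap.norm_le _ hmaxnn]
      intro t
      rw [Real.norm_eq_abs]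
      by_cases htC : t ∈ C
      · rw [hyC t htC, abs_le]
        constructor
        · linarith [(h01 t).1, le_max_left (2 * α) (1 - 2 * α)]
        · linarith [(h01 t).2, le_max_right (2 * α) (1 - 2 * α)]
      · rw [hyoff t htC]
        simpa using hmaxnn
    have hge : (1 : ℝ) ≤ max (2 * α) (1 - 2 * α) := by
      rw [hy] at hymax
      rw [hflip] at hymax
      exact hymax
    rcases le_max_iff.mp hge with h | h
    · right
      have : 2 * α = 1 := le_antisymm hd0.2 h
      linarith
    · left
      linarith [hd1.2]
  -- key computation: exactly 1/2
  have key : ∀ x : C(K, ℝ), (∀ t, 0 ≤ x t ∧ x t ≤ 1) → (∀ t, t ∉ C → x t = 0) →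
      (∃ t ∈ C, x t = 1) → (∃ t ∈ C, x t = 0) →
      a * f j x = 1/2 := by
    rintro x h01 hoff ⟨s1, hs1C, hx1⟩ ⟨s0, hs0C, hx0⟩
    set x' : C(K, ℝ) := a • e j - x with hx'
    have hx'val : ∀ t, x' t = a * e j t - x t := by
      intro t
      simp [hx']
    have hx'C : ∀ t ∈ C, x' t = 1 - x t := by
      intro t ht
      rw [hx'val, honC t ht, haa]
    have h01' : ∀ t, 0 ≤ x' t ∧ x' t ≤ 1 := by
      intro t
      by_cases ht : t ∈ C
      · rw [hx'C t ht]
        exact ⟨by linarith [(h01 t).2], by linarith [(h01 t).1]⟩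
      · rw [hx'val, hoffC t ht, hoff t ht]
        norm_num
    have hoff' : ∀ t, t ∉ C → x' t = 0 := by
      intro t ht
      rw [hx'val, hoffC t ht, hoff t ht]
      ring
    have hfx' : a * f j x' = 1 - a * f j x := by
      have h1 : f j x' = a * f j (e j) - f j x := by
        rw [hx', map_sub, map_smul, smul_eq_mul]
      have h2 : f j (e j) = 1 := by simpa using hb.biorth j j
      rw [h1, h2]
      linear_combination haa
    rcases half x h01 hoff ⟨s1, hx1⟩ ⟨s0, hs0C, hx0⟩ with h | h
    · rcases half x' h01' hoff' ⟨s0, by rw [hx'C s0 hs0C, hx0]; norm_num⟩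
        ⟨s1, hs1C, by rw [hx'C s1 hs1C, hx1]; norm_num⟩ with h' | h'
      · rw [hfx', h] at h'
        norm_num at h'
      · rw [hfx', h] at h'
        norm_num at h'
    · exact h
  -- apply to u, v, u + v
  have hu01' : ∀ t, 0 ≤ u t ∧ u t ≤ 1 := fun t => ⟨(hu01 t).1, (hu01 t).2⟩
  have hv01' : ∀ t, 0 ≤ v t ∧ v t ≤ 1 := fun t => ⟨(hv01 t).1, (hv01 t).2⟩
  have hku := key u hu01' (fun t ht => huoff t (fun h => ht (hU₁C h)))
    ⟨t₁, ht₁C, hut₁⟩ ⟨t₃, ht₃C, huoff t₃ ht₃U₁⟩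
  have hkv := key v hv01' (fun t ht => hvoff t (fun h => ht (hU₂C h)))
    ⟨t₂, ht₂C, hvt₂⟩ ⟨t₃, ht₃C, hvoff t₃ ht₃U₂⟩
  have hdisj : ∀ t, u t = 0 ∨ v t = 0 := by
    intro t
    rcases hUd t with h | h
    · exact Or.inl (huoff t h)
    · exact Or.inr (hvoff t h)
  have huv01 : ∀ t, 0 ≤ (u + v) t ∧ (u + v) t ≤ 1 := by
    intro t
    rw [ContinuousMap.add_apply]
    constructor
    · linarith [(hu01 t).1, (hv01 t).1]
    · rcases hdisj t with h | h
      · rw [h]; linarith [(hv01 t).2]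
      · rw [h]; linarith [(hu01 t).2]
  have hkuv := key (u + v) huv01
    (fun t ht => by
      rw [ContinuousMap.add_apply, huoff t (fun h => ht (hU₁C h)),
        hvoff t (fun h => ht (hU₂C h))]
      ring)
    ⟨t₁, ht₁C, by
      rw [ContinuousMap.add_apply, hut₁, hvoff t₁ (fun h => (hUd t₁).elim (fun h2 => h2 ht₁U) (fun h2 => h2 h))]
      ring⟩
    ⟨t₃, ht₃C, by
      rw [ContinuousMap.add_apply, huoff t₃ ht₃U₁, hvoff t₃ ht₃U₂]
      ring⟩
  rw [map_add, mul_add, hku, hkv] at hkuv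
  norm_num at hkuv
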